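/- (Microscopic conservation law behind the phase-field equation.) Let $L^{\rm bulk}=\sum_{y\in\Lambda}L_y+\sum_{y,i:\,y+e_i\in\Lambda}L_{y,y+e_i}$ be the bulk generator. For every $x\in\Lambda$, applying $L^{\rm bulk}$ to the coordinate function $(\sigma,\phi)\mapsto\sigma_x+\phi_x$ yields the discrete Laplacian of $\phi$ at $x$: $L^{\rm bulk}(\sigma_x+\phi_x)=\sum_{i=1}^d\big(\mathbf{1}[x+e_i\in\Lambda](\phi_{x+e_i}-\phi_x)+\mathbf{1}[x-e_i\in\Lambda](\phi_{x-e_i}-\phi_x)\big)$; in particular $L_y(\sigma_x+\phi_x)=0$ for every $y\in\Lambda$. -/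

import Mathlib

open MeasureTheory Real
open scoped NNReal ENNReal

/-- Sites of `Λ = {1,…,N}^d`: we encode the site with coordinates
`(x_1,…,x_d) ∈ {1,…,N}^d` by the function `i ↦ x_{i+1} - 1 : Fin d → Fin N`. -/
abbrev Site (d N : ℕ) := Fin d → Fin N

/-- Ginzburg–Landau variables `φ : Λ → ℝ`. -/
abbrev Conf (d N : ℕ) := Site d N → ℝ

/-- Ising spin configurations `σ : Λ → {-1,1}`, encoded by `Bool`. -/
abbrev Spin (d N : ℕ) := Site d N → Bool

/-- The spin value `±1` of a `Bool`-encoded spin. -/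
def sval (b : Bool) : ℝ := if b then 1 else -1

/-- The phase-field state space `{-1,1}^Λ × ℝ^Λ`. -/
abbrev PF (d N : ℕ) := Spin d N × Conf d N

/-- The site `x + e_i`, defined when `x + e_i ∈ Λ`,
i.e. when the `i`-th coordinate of `x` (in the `Fin N` encoding) satisfies `x i + 1 < N`. -/
def nxt {d N : ℕ} (x : Site d N) (i : Fin d) (h : (x i : ℕ) + 1 < N) : Site d N :=
  Function.update x i ⟨(x i : ℕ) + 1, h⟩

/-- The phase-field Hamiltonian
`H(σ,φ) = -∑_x ∑_i 1[x+e_i ∈ Λ] σ_x σ_{x+e_i} + (1/2) ∑_x φ_x²`. -/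
noncomputable def pfH {d N : ℕ} (z : PF d N) : ℝ :=
  -(∑ x, ∑ i, if h : (x i : ℕ) + 1 < N then sval (z.1 x) * sval (z.1 (nxt x i h)) else 0) +
    (1 / 2) * ∑ x, (z.2 x) ^ 2

/-- The spin flip `(σ,φ)^x`: replaces `(σ_x, φ_x)` by `(-σ_x, φ_x + 2σ_x)`. -/
def spinFlip {d N : ℕ} (x : Site d N) (z : PF d N) : PF d N :=
  (Function.update z.1 x (!(z.1 x)), Function.update z.2 x (z.2 x + 2 * sval (z.1 x)))

/-- The jump rate `c_x(σ,φ) = exp(-(β/2) [H((σ,φ)^x) - H(σ,φ)])`. -/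
noncomputable def rate {d N : ℕ} (β : ℝ) (x : Site d N) (z : PF d N) : ℝ :=
  Real.exp (-(β / 2) * (pfH (spinFlip x z) - pfH z))

/-- The Glauber generator `L_x g = c_x [g((σ,φ)^x) - g(σ,φ)]`. -/
noncomputable def Lflip {d N : ℕ} (β : ℝ) (x : Site d N) (g : PF d N → ℝ) :
    PF d N → ℝ :=
  fun z => rate β x z * (g (spinFlip x z) - g z)

/-- Partial derivative `∂g/∂φ_x` (in the Ginzburg–Landau variables only). -/
noncomputable def pdφ {d N : ℕ} (g : PF d N → ℝ) (x : Site d N) : PF d N → ℝ :=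
  fun z => fderiv ℝ (fun ψ => g (z.1, ψ)) z.2 (Pi.single x 1)

/-- The phase-field bulk operator on a bond `(x, y)`, `y = x + e_i`:
`L_{x,y} g = -(φ_x - φ_y)(∂_x g - ∂_y g) + β⁻¹ (∂_x - ∂_y)² g`. -/
noncomputable def pfLbond {d N : ℕ} (β : ℝ) (x y : Site d N) (g : PF d N → ℝ) :
    PF d N → ℝ :=
  fun z =>
    -((z.2 x - z.2 y) * (pdφ g x z - pdφ g y z)) +
      (1 / β) * (pdφ (pdφ g x) x z - pdφ (pdφ g x) y z - pdφ (pdφ g y) x z +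
        pdφ (pdφ g y) y z)

/-- The phase-field boundary operator with parameter `λb`:
`B_x g = -(φ_x - λb) ∂_x g + β⁻¹ ∂_x² g`. -/
noncomputable def pfBop {d N : ℕ} (β lamb : ℝ) (x : Site d N) (g : PF d N → ℝ) :
    PF d N → ℝ :=
  fun z => -((z.2 x - lamb) * pdφ g x z) + (1 / β) * pdφ (pdφ g x) x z

/-- The reference measure `dσ dφ`: counting measure in `σ`, Lebesgue in `φ`. -/
noncomputable def pfBase (d N : ℕ) : Measure (PF d N) :=
  (Measure.count : Measure (Spin d N)).prod (volume : Measure (Conf d N))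

/-- The (unnormalized) Gibbs density `exp(-β [H(σ,φ) - λ ∑_x (σ_x + φ_x)])`. -/
noncomputable def pfDensity {d N : ℕ} (β lam : ℝ) (z : PF d N) : ℝ :=
  Real.exp (-β * (pfH z - lam * ∑ x, (sval (z.1 x) + z.2 x)))

/-- The phase-field partition function. -/
noncomputable def pfZ (d N : ℕ) (β lam : ℝ) : ℝ≥0∞ :=
  ∫⁻ z, ENNReal.ofReal (pfDensity β lam z) ∂(pfBase d N)

/-- The phase-field Gibbs measure
`ν_λ(dσ,dφ) = Z_λ⁻¹ exp(-β [H(σ,φ) - λ ∑_x (σ_x + φ_x)]) dσ dφ`. -/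
noncomputable def pfNu (d N : ℕ) (β lam : ℝ) : Measure (PF d N) :=
  (pfZ d N β lam)⁻¹ •
    ((pfBase d N).withDensity fun z => ENNReal.ofReal (pfDensity β lam z))
/-- The site `x - e_i` (meaningful when `x - e_i ∈ Λ`, i.e. when `0 < (x i : ℕ)`). -/
def prd {d N : ℕ} (x : Site d N) (i : Fin d) : Site d N :=
  Function.update x i ⟨(x i : ℕ) - 1, Nat.lt_of_le_of_lt (Nat.sub_le _ _) (x i).isLt⟩


section Aux

variable {d N : ℕ}

lemma sval_not (b : Bool) : sval (!b) = - sval b := by cases b <;> simp [sval]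

lemma pdφ_omega (x w : Site d N) (z : PF d N) :
    pdφ (fun z : PF d N => sval (z.1 x) + z.2 x) w z = if x = w then 1 else 0 := by
  have h : HasFDerivAt (fun ψ : Conf d N => sval (z.1 x) + ψ x)
      (ContinuousLinearMap.proj (R := ℝ) (φ := fun _ : Site d N => ℝ) x) z.2 := by
    exact ((ContinuousLinearMap.proj (R := ℝ) (φ := fun _ : Site d N => ℝ) x).hasFDerivAt).const_add
      (sval (z.1 x))
  show fderiv ℝ (fun ψ : Conf d N => sval (z.1 x) + ψ x) z.2 (Pi.single w 1)
      = if x = w then 1 else 0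
  rw [h.fderiv]
  simp [Pi.single_apply]

lemma pd2_omega (x w v : Site d N) (z : PF d N) :
    pdφ (pdφ (fun z : PF d N => sval (z.1 x) + z.2 x) w) v z = 0 := by
  have hfun : (fun ψ : Conf d N =>
      pdφ (fun z : PF d N => sval (z.1 x) + z.2 x) w (z.1, ψ))
      = fun _ => if x = w then (1:ℝ) else 0 :=
    funext fun ψ => pdφ_omega x w (z.1, ψ)
  show fderiv ℝ (fun ψ : Conf d N =>
      pdφ (fun z : PF d N => sval (z.1 x) + z.2 x) w (z.1, ψ)) z.2 (Pi.single v 1) = 0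
  rw [hfun]
  simp

lemma pfLbond_omega (β : ℝ) (x y w : Site d N) (z : PF d N) :
    pfLbond β y w (fun z : PF d N => sval (z.1 x) + z.2 x) z
      = -((z.2 y - z.2 w) * ((if x = y then (1:ℝ) else 0) - if x = w then 1 else 0)) := by
  unfold pfLbond
  rw [pdφ_omega, pdφ_omega, pd2_omega, pd2_omega, pd2_omega, pd2_omega]
  ring

lemma nxt_ne (y : Site d N) (i : Fin d) (h : (y i : ℕ) + 1 < N) : nxt y i h ≠ y := by
  intro he
  have := congrFun he i
  rw [nxt, Function.update_self] at this
  have := congrArg Fin.val this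
  simp at this

lemma nxt_eq_x {x y : Site d N} {i : Fin d} (h : (y i : ℕ) + 1 < N)
    (he : nxt y i h = x) : y = prd x i ∧ 0 < (x i : ℕ) := by
  have hxi : (x i : ℕ) = (y i : ℕ) + 1 := by
    have := congrFun he i
    rw [nxt, Function.update_self] at this
    exact (congrArg Fin.val this).symm
  constructor
  · funext j
    rcases eq_or_ne j i with rfl | hj
    · rw [prd, Function.update_self]
      ext; simp [hxi]
    · rw [prd, Function.update_of_ne hj]
      have := congrFun he j
      rw [nxt, Function.update_of_ne hj] at this
      exact this
  · omega

lemma prd_nxt {x : Site d N} {i : Fin d} (hx : 0 < (x i : ℕ)) :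
    ∃ h : ((prd x i) i : ℕ) + 1 < N, nxt (prd x i) i h = x := by
  have hp : ((prd x i) i : ℕ) = (x i : ℕ) - 1 := by
    rw [prd, Function.update_self]
  have hN : ((prd x i) i : ℕ) + 1 < N := by
    have := (x i).isLt; omega
  refine ⟨hN, ?_⟩
  funext j
  rcases eq_or_ne j i with rfl | hj
  · rw [nxt, Function.update_self]
    ext; simp [hp]; omega
  · rw [nxt, Function.update_of_ne hj, prd, Function.update_of_ne hj]

lemma prd_ne {x : Site d N} {i : Fin d} (hx : 0 < (x i : ℕ)) : prd x i ≠ x := by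
  intro he
  have := congrArg Fin.val (congrFun he i)
  rw [prd, Function.update_self] at this
  simp at this
  omega

end Aux

/-- microscopic conservation law: the bulk generator
`L^bulk = ∑_y L_y + ∑_{y,i : y+e_i ∈ Λ} L_{y,y+e_i}` applied to the coordinate
function `ω_x = σ_x + φ_x` gives the discrete Laplacian of `φ` at `x`;
in particular each Glauber part `L_y` annihilates `ω_x`. -/
theorem pf_conservation_law (d N : ℕ) (hd : 0 < d) (hN : 1 < N)
    (β : ℝ) (hβ : 0 < β) (x : Site d N) :
    letI ω : PF d N → ℝ := fun z => sval (z.1 x) + z.2 x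
    (∀ z : PF d N,
      (∑ y : Site d N, Lflip β y ω z) +
        (∑ y : Site d N, ∑ i : Fin d,
          if h : (y i : ℕ) + 1 < N then pfLbond β y (nxt y i h) ω z else 0) =
      ∑ i : Fin d,
        ((if h : (x i : ℕ) + 1 < N then z.2 (nxt x i h) - z.2 x else 0) +
          (if 0 < (x i : ℕ) then z.2 (prd x i) - z.2 x else 0))) ∧
    (∀ (y : Site d N) (z : PF d N), Lflip β y ω z = 0) := by
  set ω : PF d N → ℝ := fun z => sval (z.1 x) + z.2 x with hω
  have hflip : ∀ (y : Site d N) (z : PF d N), Lflip β y ω z = 0 := by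
    intro y z
    have hω : ω (spinFlip y z) = ω z := by
      show sval ((spinFlip y z).1 x) + (spinFlip y z).2 x = sval (z.1 x) + z.2 x
      unfold spinFlip
      rcases eq_or_ne x y with rfl | hne
      · simp only [Function.update_self, sval_not]
        ring
      · simp only [Function.update_of_ne hne]
    show rate β y z * (ω (spinFlip y z) - ω z) = 0
    rw [hω]; ring
  refine ⟨?_, hflip⟩
  intro z
  have h1 : (∑ y : Site d N, Lflip β y ω z) = 0 := by
    simp [hflip]
  rw [h1, zero_add, Finset.sum_comm]
  refine Finset.sum_congr rfl ?_
  intro i _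
  have key : ∀ y : Site d N,
      (if h : (y i : ℕ) + 1 < N then pfLbond β y (nxt y i h) ω z else 0)
      = (if y = x then (if h : (x i : ℕ) + 1 < N then z.2 (nxt x i h) - z.2 x else 0) else 0)
      + (if y = prd x i then (if 0 < (x i : ℕ) then z.2 (prd x i) - z.2 x else 0) else 0) := by
    intro y
    rcases eq_or_ne y x with rfl | hyx
    · rw [if_pos rfl]
      have hB : (if y = prd y i then (if 0 < (y i : ℕ) then z.2 (prd y i) - z.2 y else 0) else 0)
          = 0 := by
        rcases Nat.eq_zero_or_pos (y i : ℕ) with h0 | h0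
        · simp [h0]
        · rw [if_neg (prd_ne h0).symm]
      rw [hB, add_zero]
      by_cases h : (y i : ℕ) + 1 < N
      · rw [dif_pos h, dif_pos h, pfLbond_omega]
        rw [if_pos rfl, if_neg (fun he => nxt_ne y i h he.symm)]
        ring
      · rw [dif_neg h, dif_neg h]
    · rw [if_neg hyx, zero_add]
      by_cases hyp : y = prd x i
      · have hx0 : 0 < (x i : ℕ) := by
          by_contra h0
          have : (x i : ℕ) = 0 := by omega
          apply hyx
          rw [hyp]
          funext j
          rcases eq_or_ne j i with rfl | hj
          · rw [prd, Function.update_self]; ext; simp [this]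
          · rw [prd, Function.update_of_ne hj]
        obtain ⟨hlt, hnx⟩ := prd_nxt hx0
        subst hyp
        rw [dif_pos hlt, if_pos rfl, if_pos hx0]
        rw [show nxt (prd x i) i hlt = x from hnx, pfLbond_omega]
        rw [if_neg (fun he => hyx he.symm), if_pos rfl]
        ring
      · rw [if_neg hyp]
        by_cases h : (y i : ℕ) + 1 < N
        · rw [dif_pos h, pfLbond_omega]
          rw [if_neg (fun he => hyx he.symm),
            if_neg (fun he => hyp (nxt_eq_x h he.symm).1)]
          ring
        · rw [dif_neg h]
  rw [Finset.sum_congr rfl (fun y _ => key y), Finset.sum_add_distrib]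
  rw [Finset.sum_ite_eq' Finset.univ x, Finset.sum_ite_eq' Finset.univ (prd x i)]
  simp
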